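/- arXiv:0808.0084 — 5 statements merged into one kernel-verified Lean document; each statement's English description precedes it below -/
import Mathlib

section
/- Suppose ν_1² ≥ 1/2 in the eigenexpansion √π_{-z} = Σ_j ν_j v_j with eigenphases 0 < θ_1 ≤ ... ≤ θ_{n-1} ≤ π/2. Then for every ε < 1/2, HT(P,z) ≤ 4·HT_ε(P,z), where HT(P,z) = Σ_j ν_j²/(1-cos θ_j) and HT_ε(P,z) = min{y : Pr[H_z > y] ≤ ε} for the random variable H_z taking value 1/θ_j² with probability ν_j². -/
open scoped BigOperators

lemma aux_quarter_sq {t : ℝ} (h0 : 0 < t) (h1 : t ≤ Real.pi / 2) :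
    t ^ 2 / 4 ≤ 1 - Real.cos t := by
  set x := t / 2 with hx
  have hx0 : 0 < x := by positivity
  have hx1 : x ≤ 1 := by
    have := Real.pi_lt_d2
    simp only [hx]; linarith
  have hs := Real.sin_gt_sub_cube hx0
  have hcos : Real.cos t = 1 - 2 * Real.sin x ^ 2 := by
    have h2 := Real.cos_two_mul x
    have hc := Real.sin_sq_add_cos_sq x
    rw [show 2 * x = t by rw [hx]; ring] at h2
    nlinarith
  have hxx : 0 ≤ x * (1 - x ^ 2) := mul_nonneg hx0.le (by nlinarith)
  have h3 : (3 / 4) * x ≤ Real.sin x := by nlinarith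
  have h4 : ((3 / 4) * x) ^ 2 ≤ Real.sin x ^ 2 := by
    have : 0 ≤ (3 / 4) * x := by positivity
    nlinarith
  rw [hcos]
  have : t = 2 * x := by rw [hx]; ring
  nlinarith

/-- If `ν₁² ≥ 1/2` for the smallest eigenphase, then for every `ε < 1/2`,
`HT(P,z) ≤ 4 · HT_ε(P,z)`. -/
theorem stmt_5 {J : ℕ} (θ ν : Fin J → ℝ)
    (hθpos : ∀ j, 0 < θ j) (hθle : ∀ j, θ j ≤ Real.pi / 2)
    (hν : ∑ j, ν j ^ 2 ≤ 1)
    (j₀ : Fin J) (hj₀min : ∀ j, θ j₀ ≤ θ j) (hν1 : 1 / 2 ≤ ν j₀ ^ 2)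
    (ε : ℝ) (hε0 : 0 < ε) (hε1 : ε < 1 / 2) :
    ∑ j, ν j ^ 2 / (1 - Real.cos (θ j)) ≤
      4 * sInf {y : ℝ | ∑ j ∈ Finset.univ.filter (fun j => y < 1 / θ j ^ 2), ν j ^ 2 ≤ ε} := by
  set S := {y : ℝ | ∑ j ∈ Finset.univ.filter (fun j => y < 1 / θ j ^ 2), ν j ^ 2 ≤ ε} with hS
  have hθ0 : 0 < θ j₀ := hθpos j₀
  set c := 1 / θ j₀ ^ 2 with hc
  have hc0 : 0 < c := by positivity
  -- c ∈ S : the filter is empty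
  have hmem : c ∈ S := by
    have hempty : Finset.univ.filter (fun j => c < 1 / θ j ^ 2) = ∅ := by
      apply Finset.filter_eq_empty_iff.2
      intro j _
      have h1 : θ j₀ ^ 2 ≤ θ j ^ 2 := by
        have := hj₀min j
        nlinarith [hθpos j]
      have : 1 / θ j ^ 2 ≤ 1 / θ j₀ ^ 2 :=
        one_div_le_one_div_of_le (by positivity) h1
      simp only [hc]
      linarith
    show ∑ j ∈ Finset.univ.filter (fun j => c < 1 / θ j ^ 2), ν j ^ 2 ≤ ε
    rw [hempty]
    simpa using le_of_lt hε0
  -- every y ∈ S satisfies c ≤ y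
  have hlb : ∀ y ∈ S, c ≤ y := by
    intro y hy
    by_contra hlt
    push_neg at hlt
    have hj₀mem : j₀ ∈ Finset.univ.filter (fun j => y < 1 / θ j ^ 2) := by
      simp only [Finset.mem_filter, Finset.mem_univ, true_and]
      simpa [hc] using hlt
    have hsum : ν j₀ ^ 2 ≤ ∑ j ∈ Finset.univ.filter (fun j => y < 1 / θ j ^ 2), ν j ^ 2 :=
      Finset.single_le_sum (fun j _ => sq_nonneg (ν j)) hj₀mem
    have : ∑ j ∈ Finset.univ.filter (fun j => y < 1 / θ j ^ 2), ν j ^ 2 ≤ ε := hy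
    linarith
  have hinf : c ≤ sInf S := le_csInf ⟨c, hmem⟩ hlb
  -- pointwise bound
  have key : ∀ j, ν j ^ 2 / (1 - Real.cos (θ j)) ≤ 4 * c * ν j ^ 2 := by
    intro j
    have hq := aux_quarter_sq (hθpos j) (hθle j)
    have h1 : θ j₀ ^ 2 / 4 ≤ θ j ^ 2 / 4 := by
      have := hj₀min j
      nlinarith [hθpos j]
    have hb0 : 0 < θ j₀ ^ 2 / 4 := by positivity
    have hle : θ j₀ ^ 2 / 4 ≤ 1 - Real.cos (θ j) := by linarith
    have := div_le_div_of_nonneg_left (sq_nonneg (ν j)) hb0 hle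
    calc ν j ^ 2 / (1 - Real.cos (θ j)) ≤ ν j ^ 2 / (θ j₀ ^ 2 / 4) := this
      _ = 4 * c * ν j ^ 2 := by rw [hc]; field_simp
  calc ∑ j, ν j ^ 2 / (1 - Real.cos (θ j)) ≤ ∑ j, 4 * c * ν j ^ 2 :=
        Finset.sum_le_sum fun j _ => key j
    _ = 4 * c * ∑ j, ν j ^ 2 := by rw [Finset.mul_sum]
    _ ≤ 4 * c * 1 := by
        apply mul_le_mul_of_nonneg_left hν (by positivity)
    _ = 4 * c := by ring
    _ ≤ 4 * sInf S := by linarith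
end

section
/- Let P be an ergodic reversible Markov chain whose k-step non-hitting probability is s_k = Σ_j ν_j² (cos θ_j)^k, and let h_ε(P,z) be the least k with s_k ≤ ε, and HT_ε(P,z) = min{y : Σ_{j : 1/θ_j² > y} ν_j² ≤ ε}. Then h_ε(P,z) ≤ (4 ln(2/ε)) · HT_{ε/2}(P,z). -/
open scoped BigOperators

/-- For `0 < θ ≤ π/2` we have `cos θ ≤ exp (-(θ²/2))`. -/
lemma cos_le_exp_neg_sq_half {θ : ℝ} (h0 : 0 < θ) (h2 : θ ≤ Real.pi / 2) :
    Real.cos θ ≤ Real.exp (-(θ ^ 2 / 2)) := by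
  have ht0 : 0 < θ / 2 := by linarith
  have ht1 : θ / 2 ≤ 1 := by
    have := Real.pi_le_four; linarith
  have hsin : θ / 2 - (θ / 2) ^ 3 / 4 < Real.sin (θ / 2) := by
    have := Real.sin_gt_sub_cube ht0; linarith [pow_pos ht0 3]
  have hcos : Real.cos θ = 1 - 2 * Real.sin (θ / 2) ^ 2 := by
    have h := Real.cos_two_mul (θ / 2)
    have h2' := Real.sin_sq_add_cos_sq (θ / 2)
    have hθ : 2 * (θ / 2) = θ := by ring
    rw [hθ] at h
    nlinarith
  have ht3 : (θ / 2) ^ 3 ≤ θ / 2 := by nlinarith [mul_le_of_le_one_right ht0.le ht1, sq_nonneg (θ / 2)]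
  have hnn : 0 ≤ θ / 2 - (θ / 2) ^ 3 / 4 := by linarith
  have hs2 : (θ / 2 - (θ / 2) ^ 3 / 4) ^ 2 ≤ Real.sin (θ / 2) ^ 2 := by
    nlinarith
  have key : Real.cos θ ≤ (1 - (θ / 2) ^ 2) ^ 2 := by
    rw [hcos]; nlinarith [hs2, pow_nonneg ht0.le 6, sq_nonneg ((θ / 2) ^ 3)]
  have h1t : 0 ≤ 1 - (θ / 2) ^ 2 := by nlinarith
  have hexp : 1 - (θ / 2) ^ 2 ≤ Real.exp (-(θ / 2) ^ 2) := by
    have := Real.add_one_le_exp (-(θ / 2) ^ 2); linarith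
  calc Real.cos θ ≤ (1 - (θ / 2) ^ 2) ^ 2 := key
    _ ≤ Real.exp (-(θ / 2) ^ 2) ^ 2 := pow_le_pow_left₀ h1t hexp 2
    _ = Real.exp (-(θ / 2) ^ 2 + -(θ / 2) ^ 2) := by rw [sq, ← Real.exp_add]
    _ = Real.exp (-(θ ^ 2 / 2)) := by congr 1; ring

/-- `h_ε(P,z) ≤ (4 ln(2/ε)) · HT_{ε/2}(P,z)`, where `h_ε` is the least `k`
with non-hitting probability `s_k = Σ ν_j² (cos θ_j)^k ≤ ε`. -/
theorem stmt_6 {J : ℕ} (θ ν : Fin J → ℝ)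
    (hθpos : ∀ j, 0 < θ j) (hθle : ∀ j, θ j ≤ Real.pi / 2)
    (hν : ∑ j, ν j ^ 2 ≤ 1)
    (ε : ℝ) (hε0 : 0 < ε) (hε1 : ε < 1) :
    ((sInf {k : ℕ | ∑ j, ν j ^ 2 * Real.cos (θ j) ^ k ≤ ε} : ℕ) : ℝ) ≤
      (4 * Real.log (2 / ε)) *
        sInf {y : ℝ | ∑ j ∈ Finset.univ.filter (fun j => y < 1 / θ j ^ 2), ν j ^ 2 ≤ ε / 2} := by
  set L := Real.log (2 / ε) with hLdef
  set S : Set ℝ :=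
    {y : ℝ | ∑ j ∈ Finset.univ.filter (fun j => y < 1 / θ j ^ 2), ν j ^ 2 ≤ ε / 2} with hSdef
  have hmemS : ∀ y : ℝ, y ∈ S ↔
      ∑ j ∈ Finset.univ.filter (fun j => y < 1 / θ j ^ 2), ν j ^ 2 ≤ ε / 2 := by
    intro y; rw [hSdef]; exact Set.mem_setOf_eq ▸ Iff.rfl
  have hL2 : Real.log 2 ≤ L := by
    rw [hLdef]
    apply Real.log_le_log (by norm_num)
    rw [le_div_iff₀ hε0]; nlinarith
  have hlog2 : (0.6931471803 : ℝ) < Real.log 2 := Real.log_two_gt_d9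
  have hLpos : 0 < L := by linarith
  have hfilter_le : ∀ y : ℝ,
      ∑ j ∈ Finset.univ.filter (fun j => y < 1 / θ j ^ 2), ν j ^ 2 ≤ ∑ j, ν j ^ 2 :=
    fun y => Finset.sum_le_sum_of_subset_of_nonneg (Finset.filter_subset _ _)
      (fun j _ _ => sq_nonneg _)
  -- the infimum of S is nonnegative
  have hSnonneg : 0 ≤ sInf S := by
    by_cases hex : ∃ y ∈ S, y < 0
    · obtain ⟨y, hyS, hy0⟩ := hex
      rw [hmemS] at hyS
      have hall : ∑ j, ν j ^ 2 ≤ ε / 2 := by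
        have hfe : Finset.univ.filter (fun j => y < 1 / θ j ^ 2) = Finset.univ := by
          apply Finset.filter_true_of_mem
          intro j _
          have : 0 < 1 / θ j ^ 2 := by have := hθpos j; positivity
          linarith
        rw [hfe] at hyS
        exact hyS
      have hSuniv : ∀ z : ℝ, z ∈ S := fun z => (hmemS z).mpr (le_trans (hfilter_le z) hall)
      have hnb : ¬ BddBelow S := by
        rintro ⟨b, hb⟩
        have := hb (hSuniv (b - 1))
        linarith
      rw [Real.sInf_of_not_bddBelow hnb]
    · push_neg at hex
      exact Real.sInf_nonneg hex
  by_cases hA : ∑ j, ν j ^ 2 ≤ ε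
  · -- then s₀ ≤ ε already, LHS = 0.
    have h0 : (0 : ℕ) ∈ {k : ℕ | ∑ j, ν j ^ 2 * Real.cos (θ j) ^ k ≤ ε} := by
      simp only [Set.mem_setOf_eq, pow_zero, mul_one]; exact hA
    rw [Nat.sInf_eq_zero.mpr (Or.inl h0)]
    push_cast
    exact mul_nonneg (by positivity) hSnonneg
  push_neg at hA
  -- Case B : ε < ∑ ν², so J ≠ 0 and S is bounded below by 4/π².
  have hJ : J ≠ 0 := by
    rintro rfl
    simp at hA
    linarith
  obtain ⟨y₀, hy₀⟩ := (Finset.univ.image (fun j => 1 / θ j ^ 2)).exists_le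
  have hy₀S : y₀ ∈ S := by
    rw [hmemS]
    have hfe : Finset.univ.filter (fun j => y₀ < 1 / θ j ^ 2) = ∅ := by
      rw [Finset.filter_eq_empty_iff]
      intro j _
      exact not_lt.mpr (hy₀ _ (Finset.mem_image_of_mem _ (Finset.mem_univ j)))
    rw [hfe, Finset.sum_empty]
    positivity
  have hlb : ∀ y ∈ S, 4 / Real.pi ^ 2 ≤ y := by
    intro y hy
    rw [hmemS] at hy
    by_contra hlt
    push_neg at hlt
    have hpi : 0 < Real.pi := Real.pi_pos
    have hfe : Finset.univ.filter (fun j => y < 1 / θ j ^ 2) = Finset.univ := by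
      apply Finset.filter_true_of_mem
      intro j _
      have hθj := hθpos j
      have hθj2 := hθle j
      have h1 : 4 / Real.pi ^ 2 ≤ 1 / θ j ^ 2 := by
        rw [div_le_div_iff₀ (by positivity) (by positivity)]
        nlinarith
      linarith
    rw [hfe] at hy
    linarith
  have hbdd : BddBelow S := ⟨_, hlb⟩
  set H := sInf S with hHdef
  have hHlb : 4 / Real.pi ^ 2 ≤ H := le_csInf ⟨y₀, hy₀S⟩ hlb
  have hHpos : 0 < H := lt_of_lt_of_le (by positivity) hHlb
  -- H itself belongs to S
  have hHS : ∑ j ∈ Finset.univ.filter (fun j => H < 1 / θ j ^ 2), ν j ^ 2 ≤ ε / 2 := by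
    set A := Finset.univ.filter (fun j => H < 1 / θ j ^ 2) with hAdef
    rcases A.eq_empty_or_nonempty with hAe | hAne
    · rw [hAe, Finset.sum_empty]; positivity
    · have hHm : H < A.inf' hAne (fun j => 1 / θ j ^ 2) := by
        rw [Finset.lt_inf'_iff]
        intro j hj
        exact (Finset.mem_filter.mp hj).2
      obtain ⟨y, hyS, hym⟩ := exists_lt_of_csInf_lt ⟨y₀, hy₀S⟩ hHm
      rw [hmemS] at hyS
      refine le_trans (Finset.sum_le_sum_of_subset_of_nonneg ?_
        (fun j _ _ => sq_nonneg _)) hyS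
      intro j hj
      have hmj : A.inf' hAne (fun j => 1 / θ j ^ 2) ≤ 1 / θ j ^ 2 :=
        Finset.inf'_le _ hj
      simp only [Finset.mem_filter, Finset.mem_univ, true_and]
      linarith
  -- choose k := ⌈2 H L⌉
  set k := ⌈2 * H * L⌉₊ with hkdef
  have hkk : 2 * H * L ≤ (k : ℝ) := Nat.le_ceil _
  have h2HL : 0 < 2 * H * L := by positivity
  have hk1 : 1 ≤ k := Nat.one_le_iff_ne_zero.mpr (Nat.ceil_pos.mpr h2HL).ne'
  have hkle : (k : ℝ) ≤ 4 * L * H := by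
    by_cases hc : 1 ≤ 2 * H * L
    · have := Nat.ceil_lt_add_one h2HL.le
      rw [← hkdef] at this
      nlinarith
    · push_neg at hc
      have hkeq : k = 1 := by
        refine le_antisymm ?_ hk1
        rw [hkdef]
        exact Nat.ceil_le.mpr (by push_cast; linarith)
      have hpi : Real.pi < 3.15 := Real.pi_lt_d2
      have hpi0 : 0 < Real.pi := Real.pi_pos
      have hH4 : 4 ≤ H * Real.pi ^ 2 := by
        rw [div_le_iff₀ (by positivity)] at hHlb
        linarith
      have h1 : (1 : ℝ) ≤ 4 * L * H := by nlinarith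
      rw [hkeq]; push_cast; linarith
  -- k belongs to the hitting set
  have hcos0 : ∀ j, 0 ≤ Real.cos (θ j) := by
    intro j
    apply Real.cos_nonneg_of_mem_Icc
    constructor
    · have := hθpos j; have := Real.pi_pos; linarith
    · exact hθle j
  have hmem : k ∈ {k : ℕ | ∑ j, ν j ^ 2 * Real.cos (θ j) ^ k ≤ ε} := by
    simp only [Set.mem_setOf_eq]
    rw [← Finset.sum_filter_add_sum_filter_not Finset.univ (fun j => H < 1 / θ j ^ 2)
      (fun j => ν j ^ 2 * Real.cos (θ j) ^ k)]
    have h1 : ∑ j ∈ Finset.univ.filter (fun j => H < 1 / θ j ^ 2),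
        ν j ^ 2 * Real.cos (θ j) ^ k ≤ ε / 2 := by
      refine le_trans (Finset.sum_le_sum ?_) hHS
      intro j _
      have hck : Real.cos (θ j) ^ k ≤ 1 := pow_le_one₀ (hcos0 j) (Real.cos_le_one _)
      nlinarith [sq_nonneg (ν j), pow_nonneg (hcos0 j) k]
    have h2 : ∑ j ∈ Finset.univ.filter (fun j => ¬ H < 1 / θ j ^ 2),
        ν j ^ 2 * Real.cos (θ j) ^ k ≤ ε / 2 := by
      have hexpL : Real.exp (-L) = ε / 2 := by
        rw [hLdef, Real.exp_neg, Real.exp_log (by positivity), inv_div]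
      have hterm : ∀ j ∈ Finset.univ.filter (fun j => ¬ H < 1 / θ j ^ 2),
          ν j ^ 2 * Real.cos (θ j) ^ k ≤ ν j ^ 2 * (ε / 2) := by
        intro j hj
        simp only [Finset.mem_filter, Finset.mem_univ, true_and, not_lt] at hj
        have hθ2pos : 0 < θ j ^ 2 := by have := hθpos j; positivity
        have hinv : 1 / H ≤ θ j ^ 2 := (one_div_le hθ2pos hHpos).mp hj
        have hpow : Real.cos (θ j) ^ k ≤ Real.exp (-(θ j ^ 2 / 2)) ^ k :=
          pow_le_pow_left₀ (hcos0 j) (cos_le_exp_neg_sq_half (hθpos j) (hθle j)) k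
        have hexpk : Real.exp (-(θ j ^ 2 / 2)) ^ k = Real.exp ((k : ℝ) * (-(θ j ^ 2 / 2))) :=
          (Real.exp_nat_mul _ k).symm
        have hle : Real.exp ((k : ℝ) * (-(θ j ^ 2 / 2))) ≤ Real.exp (-L) := by
          apply Real.exp_le_exp.mpr
          have hmul : (2 * H * L) * (1 / H) ≤ (k : ℝ) * (θ j ^ 2) :=
            mul_le_mul hkk hinv (by positivity) (Nat.cast_nonneg k)
          have heq : (2 * H * L) * (1 / H) = 2 * L := by
            field_simp
          rw [heq] at hmul
          nlinarith
        have hck : Real.cos (θ j) ^ k ≤ ε / 2 := by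
          rw [hexpk] at hpow
          calc Real.cos (θ j) ^ k ≤ Real.exp ((k : ℝ) * (-(θ j ^ 2 / 2))) := hpow
            _ ≤ Real.exp (-L) := hle
            _ = ε / 2 := hexpL
        exact mul_le_mul_of_nonneg_left hck (sq_nonneg _)
      calc ∑ j ∈ Finset.univ.filter (fun j => ¬ H < 1 / θ j ^ 2),
            ν j ^ 2 * Real.cos (θ j) ^ k
          ≤ ∑ j ∈ Finset.univ.filter (fun j => ¬ H < 1 / θ j ^ 2), ν j ^ 2 * (ε / 2) :=
            Finset.sum_le_sum hterm
        _ = (∑ j ∈ Finset.univ.filter (fun j => ¬ H < 1 / θ j ^ 2), ν j ^ 2) * (ε / 2) := by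
            rw [← Finset.sum_mul]
        _ ≤ 1 * (ε / 2) := by
            apply mul_le_mul_of_nonneg_right _ (by positivity)
            exact le_trans (Finset.sum_le_sum_of_subset_of_nonneg
              (Finset.filter_subset _ _) (fun j _ _ => sq_nonneg _)) hν
        _ = ε / 2 := one_mul _
    linarith
  calc ((sInf {k : ℕ | ∑ j, ν j ^ 2 * Real.cos (θ j) ^ k ≤ ε} : ℕ) : ℝ)
      ≤ (k : ℝ) := Nat.cast_le.mpr (Nat.sInf_le hmem)
    _ ≤ 4 * L * H := hkle
    _ = 4 * L * sInf S := by rw [hHdef]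
end

section
/- Let U₂ be a real unitary matrix with a unique 1-eigenvector |φ₀⟩, let |μ⟩ be a real unit vector, and set U = U₂(I - 2|μ⟩⟨μ|). If ⟨φ₀|μ⟩ = 0 then U|φ₀⟩ = |φ₀⟩; if ⟨φ₀|μ⟩ ≠ 0 then U has no eigenvalue equal to 1. -/
open scoped BigOperators
open scoped Matrix

lemma vecMulVec_mulVec_aux {n : ℕ} (μ v : Fin n → ℝ) :
    (Matrix.vecMulVec μ μ).mulVec v = (μ ⬝ᵥ v) • μ := by
  funext i
  simp only [Matrix.mulVec, Matrix.vecMulVec_apply, dotProduct, Pi.smul_apply,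
    smul_eq_mul, Finset.sum_mul, Finset.mul_sum]
  exact Finset.sum_congr rfl fun j _ => by ring

/-- For an abstract search operator `U = U₂ (I - 2|μ⟩⟨μ|)` with `U₂` real
orthogonal having unique 1-eigenvector `φ₀`: if `⟨φ₀|μ⟩ = 0` then `U φ₀ = φ₀`;
if `⟨φ₀|μ⟩ ≠ 0` then `U` has no 1-eigenvector. -/
theorem stmt_8 {n : ℕ} (U2 : Matrix (Fin n) (Fin n) ℝ)
    (hU2 : U2.transpose * U2 = 1)
    (φ0 : Fin n → ℝ) (hφ0 : φ0 ≠ 0) (hfix : U2.mulVec φ0 = φ0)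
    (hunique : ∀ v : Fin n → ℝ, U2.mulVec v = v → ∃ c : ℝ, v = c • φ0)
    (μ : Fin n → ℝ) (hμ : ∑ i, μ i ^ 2 = 1) :
    ((∑ i, φ0 i * μ i) = 0 →
      (U2 * (1 - (2 : ℝ) • Matrix.vecMulVec μ μ)).mulVec φ0 = φ0) ∧
    ((∑ i, φ0 i * μ i) ≠ 0 →
      ¬ ∃ v : Fin n → ℝ, v ≠ 0 ∧
        (U2 * (1 - (2 : ℝ) • Matrix.vecMulVec μ μ)).mulVec v = v) := by
  have hdot : ∀ v : Fin n → ℝ,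
      (U2 * (1 - (2 : ℝ) • Matrix.vecMulVec μ μ)).mulVec v
        = U2.mulVec (v - ((2 : ℝ) * (μ ⬝ᵥ v)) • μ) := by
    intro v
    rw [← Matrix.mulVec_mulVec]
    congr 1
    rw [Matrix.sub_mulVec, Matrix.one_mulVec, Matrix.smul_mulVec,
      vecMulVec_mulVec_aux, smul_smul]
  -- transpose fixes φ0
  have hT : U2ᵀ.mulVec φ0 = φ0 := by
    conv_lhs => rw [← hfix]
    rw [Matrix.mulVec_mulVec, hU2, Matrix.one_mulVec]
  constructor
  · intro h
    have hμφ : μ ⬝ᵥ φ0 = 0 := by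
      rw [dotProduct_comm]; exact h
    rw [hdot, hμφ]
    simp [hfix]
  · rintro h ⟨v, hv0, hveq⟩
    rw [hdot] at hveq
    set c : ℝ := μ ⬝ᵥ v with hc
    -- pair with φ0
    have h1 : φ0 ⬝ᵥ v = φ0 ⬝ᵥ v - (2 * c) * (φ0 ⬝ᵥ μ) := by
      conv_lhs => rw [← hveq]
      rw [Matrix.dotProduct_mulVec, ← Matrix.mulVec_transpose, hT,
        dotProduct_sub, dotProduct_smul, smul_eq_mul]
    have hc0 : c = 0 := by
      have := sub_eq_of_eq_add' (by linarith [h1] : φ0 ⬝ᵥ v = φ0 ⬝ᵥ v - (2*c) * (φ0 ⬝ᵥ μ))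
      have h2 : (2 * c) * (φ0 ⬝ᵥ μ) = 0 := by linarith [h1]
      rcases mul_eq_zero.mp h2 with h3 | h3
      · rcases mul_eq_zero.mp h3 with h4 | h4
        · norm_num at h4
        · exact h4
      · exact absurd h3 h
    rw [hc0] at hveq
    simp only [mul_zero, zero_smul, sub_zero] at hveq
    obtain ⟨k, hk⟩ := hunique v hveq
    have hk0 : k ≠ 0 := by rintro rfl; simp at hk; exact hv0 hk
    have : c = k * (φ0 ⬝ᵥ μ) := by
      rw [hc, hk, dotProduct_smul, smul_eq_mul, dotProduct_comm]
    rw [hc0] at this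
    exact h (by rcases mul_eq_zero.mp this.symm with h' | h' <;> [exact absurd h' hk0; exact h'])
end

section
/- For a reversible ergodic Markov chain P with all eigenvalues positive, the quantum z-hitting time satisfies QHT(P,z) = Σ_j ν_j²/θ_j = E[√H_z], and hence QHT(P,z) ≤ √(E[H_z]) ≤ √(HT(P,z)/2). -/
open scoped BigOperators

/-- `QHT(P,z) = Σ ν_j²/θ_j ≤ √(E[H_z]) ≤ √(HT(P,z)/2)`. -/
theorem stmt_10 {J : ℕ} (θ ν : Fin J → ℝ)
    (hθpos : ∀ j, 0 < θ j) (hθlt : ∀ j, θ j < Real.pi / 2)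
    (hν : ∑ j, ν j ^ 2 ≤ 1) :
    (∑ j, ν j ^ 2 / θ j) ≤ Real.sqrt (∑ j, ν j ^ 2 / θ j ^ 2) ∧
      Real.sqrt (∑ j, ν j ^ 2 / θ j ^ 2) ≤
        Real.sqrt ((∑ j, ν j ^ 2 / (1 - Real.cos (θ j))) / 2) := by
  have h2 : ∑ j, ν j ^ 2 / θ j ^ 2 ≥ 0 :=
    Finset.sum_nonneg fun j _ => div_nonneg (sq_nonneg _) (sq_nonneg _)
  constructor
  · apply Real.le_sqrt_of_sq_le
    calc (∑ j, ν j ^ 2 / θ j) ^ 2 = (∑ j, ν j * (ν j / θ j)) ^ 2 := by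
            congr 1; apply Finset.sum_congr rfl; intro j _; rw [sq]; ring
        _ ≤ (∑ j, ν j ^ 2) * ∑ j, (ν j / θ j) ^ 2 :=
            Finset.sum_mul_sq_le_sq_mul_sq _ _ _
        _ ≤ 1 * ∑ j, (ν j / θ j) ^ 2 := by
            apply mul_le_mul_of_nonneg_right hν
            exact Finset.sum_nonneg fun j _ => sq_nonneg _
        _ = ∑ j, ν j ^ 2 / θ j ^ 2 := by
            rw [one_mul]; apply Finset.sum_congr rfl; intro j _; rw [div_pow]
  · apply Real.sqrt_le_sqrt
    rw [Finset.sum_div]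
    apply Finset.sum_le_sum
    intro j _
    have hc : Real.cos (θ j) < 1 := by
      have := Real.cos_lt_cos_of_nonneg_of_le_pi le_rfl
        (le_of_lt (lt_trans (hθlt j) (by linarith [Real.pi_pos]))) (hθpos j)
      simpa using this
    have hpos : 0 < 1 - Real.cos (θ j) := by linarith
    rw [div_div]
    apply div_le_div_of_nonneg_left (sq_nonneg _) (by positivity)
    have := Real.one_sub_sq_div_two_le_cos (x := θ j)
    nlinarith
end

section
/- Under the hypotheses of the preceding lemma (in particular tan θ = a₀ cot(α₁/2)/10 and cot(α₁^θ/2) ≤ 1.01 cot(α₁/2)), the modified eigenvectors satisfy ‖w_{α₁,θ} − w_{−α₁,θ}‖² ≤ 8 cos²θ · ‖w_{α₁} − w_{−α₁}‖², and hence ‖w_{±α₁,θ}‖ ≤ 3 cos θ · ‖w_{±α₁}‖. -/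
open scoped BigOperators

set_option maxHeartbeats 800000

private lemma frac_sq_mono {aθ a1 t : ℝ} (h0 : 0 < aθ) (h1 : aθ ≤ a1) (h2 : a1 < t)
    (h3 : t < Real.pi) (h4 : a1 ≤ Real.pi / 4) :
    (Real.sin aθ / (Real.cos aθ - Real.cos t)) ^ 2
      ≤ (Real.sin a1 / (Real.cos a1 - Real.cos t)) ^ 2 := by
  have hpi := Real.pi_pos
  have ha1pos : 0 < a1 := lt_of_lt_of_le h0 h1
  have hden1 : 0 < Real.cos a1 - Real.cos t :=
    sub_pos.mpr (Real.cos_lt_cos_of_nonneg_of_le_pi ha1pos.le h3.le h2)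
  have hdenθ : 0 < Real.cos aθ - Real.cos t :=
    sub_pos.mpr (Real.cos_lt_cos_of_nonneg_of_le_pi h0.le h3.le (lt_of_le_of_lt h1 h2))
  have hsθ : 0 ≤ Real.sin aθ :=
    Real.sin_nonneg_of_nonneg_of_le_pi h0.le (by linarith)
  have key : Real.sin aθ / (Real.cos aθ - Real.cos t)
      ≤ Real.sin a1 / (Real.cos a1 - Real.cos t) := by
    rw [div_le_div_iff₀ hdenθ hden1]
    set u := (a1 - aθ) / 2 with hu
    set v := (a1 + aθ) / 2 with hv
    have haθ : aθ = v - u := by rw [hu, hv]; ring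
    have ha1' : a1 = v + u := by rw [hu, hv]; ring
    have hu0 : 0 ≤ u := by rw [hu]; linarith
    have huv : u ≤ v := by rw [hu, hv]; linarith
    have hvle : v ≤ Real.pi / 4 := by rw [hv]; linarith
    have hsu : 0 ≤ Real.sin u := Real.sin_nonneg_of_nonneg_of_le_pi hu0 (by linarith)
    have hcuv : Real.cos v ≤ Real.cos u :=
      Real.cos_le_cos_of_nonneg_of_le_pi hu0 (by linarith) huv
    have hcv0 : 0 ≤ Real.cos v :=
      Real.cos_nonneg_of_mem_Icc ⟨by linarith, by linarith [Real.pi_le_four]⟩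
    have hct : Real.cos t ≤ 1 := Real.cos_le_one t
    have hpyth : Real.sin u * Real.cos u * (Real.sin v ^ 2 + Real.cos v ^ 2)
        = Real.sin u * Real.cos u := by
      rw [Real.sin_sq_add_cos_sq]; ring
    rw [haθ, ha1', Real.sin_sub, Real.sin_add, Real.cos_sub, Real.cos_add]
    nlinarith [mul_nonneg hsu (sub_nonneg.mpr hcuv),
      mul_nonneg (mul_nonneg hsu hcv0) (sub_nonneg.mpr hct), hpyth]
  have h0' : 0 ≤ Real.sin aθ / (Real.cos aθ - Real.cos t) := div_nonneg hsθ hdenθ.le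
  exact pow_le_pow_left₀ h0' key 2

/-- `‖w_{α₁,θ} - w_{-α₁,θ}‖² ≤ 8 cos²θ ‖w_{α₁} - w_{-α₁}‖²` and hence
`‖w_{±α₁,θ}‖ ≤ 3 cosθ ‖w_{±α₁}‖`, where `‖w_{α₁} - w_{-α₁}‖² = 2‖w_{±α₁}‖²`
by orthogonality and equality of norms. -/
theorem stmt_18 {J : ℕ} (θ : Fin J → ℝ) (a0 : ℝ) (a : Fin J → ℝ)
    (α1 αθ θmin θv : ℝ)
    (hθmin : ∀ j, θmin ≤ θ j) (hθπ : ∀ j, θ j < Real.pi)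
    (hαθ0 : 0 < αθ) (hαθα1 : αθ ≤ α1) (hα1lt : α1 < θmin) (hα1 : α1 ≤ Real.pi / 4)
    (ha0 : a0 ≠ 0)
    (hθv : 0 ≤ θv ∧ θv < Real.pi / 2)
    (htan : Real.tan θv = a0 * Real.cot (α1 / 2) / 10)
    (hcot : Real.cot (αθ / 2) ≤ 1.01 * Real.cot (α1 / 2))
    (N Nθ : ℝ) (hN : 0 ≤ N) (hNθ : 0 ≤ Nθ)
    (hNsq : 2 * N ^ 2 = 4 * (a0 ^ 2 * Real.cot (α1 / 2) ^ 2 +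
      2 * ∑ j, a j ^ 2 * (Real.sin α1 / (Real.cos α1 - Real.cos (θ j))) ^ 2))
    (hNθsq : 2 * Nθ ^ 2 = 4 * Real.cos θv ^ 2 *
      (a0 ^ 2 * Real.cot (αθ / 2) ^ 2 +
        2 * (∑ j, a j ^ 2 * (Real.sin αθ / (Real.cos αθ - Real.cos (θ j))) ^ 2) +
        Real.tan θv ^ 2 * Real.tan (αθ / 2) ^ 2)) :
    2 * Nθ ^ 2 ≤ 8 * Real.cos θv ^ 2 * (2 * N ^ 2) ∧
      Nθ ≤ 3 * Real.cos θv * N := by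
  have hpi := Real.pi_pos
  have hα1pos : 0 < α1 := lt_of_lt_of_le hαθ0 hαθα1
  have hs1 : 0 < Real.sin (α1 / 2) :=
    Real.sin_pos_of_pos_of_lt_pi (by linarith) (by linarith)
  have hsθ2 : 0 < Real.sin (αθ / 2) :=
    Real.sin_pos_of_pos_of_lt_pi (by linarith) (by linarith)
  have hc1 : 0 < Real.cos (α1 / 2) :=
    Real.cos_pos_of_mem_Ioo ⟨by linarith, by linarith⟩
  have hcθ2 : 0 < Real.cos (αθ / 2) :=
    Real.cos_pos_of_mem_Ioo ⟨by linarith, by linarith⟩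
  have hsc1 : Real.sin (α1 / 2) ≤ Real.cos (α1 / 2) := by
    rw [← Real.sin_pi_div_two_sub]
    exact Real.sin_le_sin_of_le_of_le_pi_div_two (by linarith) (by linarith) (by linarith)
  have hcot1ge : 1 ≤ Real.cot (α1 / 2) := by
    rw [Real.cot_eq_cos_div_sin, le_div_iff₀ hs1]; linarith
  have hcot1pos : 0 < Real.cot (α1 / 2) := lt_of_lt_of_le one_pos hcot1ge
  have hcotmono : Real.cot (α1 / 2) ≤ Real.cot (αθ / 2) := by
    rw [Real.cot_eq_cos_div_sin, Real.cot_eq_cos_div_sin]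
    have hcc : Real.cos (α1 / 2) ≤ Real.cos (αθ / 2) :=
      Real.cos_le_cos_of_nonneg_of_le_pi (by linarith) (by linarith) (by linarith)
    have hss : Real.sin (αθ / 2) ≤ Real.sin (α1 / 2) :=
      Real.sin_le_sin_of_le_of_le_pi_div_two (by linarith) (by linarith) (by linarith)
    exact div_le_div₀ hcθ2.le hcc hsθ2 hss
  have hcotθpos : 0 < Real.cot (αθ / 2) := lt_of_lt_of_le hcot1pos hcotmono
  have htc : Real.tan (αθ / 2) * Real.cot (αθ / 2) = 1 := by
    rw [Real.tan_eq_sin_div_cos, Real.cot_eq_cos_div_sin]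
    field_simp
  set c1 := Real.cot (α1 / 2) with hc1def
  set cθ := Real.cot (αθ / 2) with hcθdef
  set tθ := Real.tan (αθ / 2) with htθdef
  -- tan θv ^2 * tan(αθ/2)^2 ≤ a0^2/100
  have hsqle : c1 ^ 2 ≤ cθ ^ 2 := pow_le_pow_left₀ hcot1pos.le hcotmono 2
  have hone : c1 ^ 2 * tθ ^ 2 ≤ 1 := by
    calc c1 ^ 2 * tθ ^ 2 ≤ cθ ^ 2 * tθ ^ 2 :=
          mul_le_mul_of_nonneg_right hsqle (sq_nonneg _)
      _ = (tθ * cθ) ^ 2 := by ring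
      _ = 1 := by rw [htc]; norm_num
  have htantan : Real.tan θv ^ 2 * tθ ^ 2 ≤ a0 ^ 2 / 100 := by
    have h1 : Real.tan θv ^ 2 = a0 ^ 2 * c1 ^ 2 / 100 := by rw [htan]; ring
    rw [h1]
    linarith [mul_le_mul_of_nonneg_left hone (sq_nonneg a0)]
  have hcotsq : cθ ^ 2 ≤ 1.0201 * c1 ^ 2 := by nlinarith [hcotθpos.le, hcot]
  -- sums
  set S1 := ∑ j, a j ^ 2 * (Real.sin α1 / (Real.cos α1 - Real.cos (θ j))) ^ 2 with hS1
  set Sθ := ∑ j, a j ^ 2 * (Real.sin αθ / (Real.cos αθ - Real.cos (θ j))) ^ 2 with hSθ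
  have hsum : Sθ ≤ S1 := by
    apply Finset.sum_le_sum
    intro j _
    have hj : α1 < θ j := lt_of_lt_of_le hα1lt (hθmin j)
    exact mul_le_mul_of_nonneg_left
      (frac_sq_mono hαθ0 hαθα1 hj (hθπ j) hα1) (sq_nonneg _)
  have hc1sq1 : 1 ≤ c1 ^ 2 := by nlinarith [hcot1ge, hcot1pos.le]
  have ha0c : a0 ^ 2 ≤ a0 ^ 2 * c1 ^ 2 := by nlinarith [sq_nonneg a0, hc1sq1]
  have hS1nn : 0 ≤ S1 := Finset.sum_nonneg fun j _ => by positivity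
  have hXnn : 0 ≤ a0 ^ 2 * c1 ^ 2 := by positivity
  have hA : a0 ^ 2 * cθ ^ 2 + 2 * Sθ + Real.tan θv ^ 2 * tθ ^ 2
      ≤ 2 * (a0 ^ 2 * c1 ^ 2 + 2 * S1) := by
    linarith [mul_le_mul_of_nonneg_left hcotsq (sq_nonneg a0), htantan, ha0c, hsum,
      hS1nn, hXnn]
  have hcos2 : 0 ≤ Real.cos θv ^ 2 := sq_nonneg _
  have hAN : a0 ^ 2 * cθ ^ 2 + 2 * Sθ + Real.tan θv ^ 2 * tθ ^ 2 ≤ N ^ 2 := by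
    linarith
  have hmain : 2 * Nθ ^ 2 ≤ 8 * Real.cos θv ^ 2 * (2 * N ^ 2) := by
    rw [hNθsq]
    linarith [mul_le_mul_of_nonneg_left hAN hcos2, sq_nonneg (Real.cos θv * N)]
  refine ⟨hmain, ?_⟩
  have hsq : Nθ ^ 2 ≤ (3 * Real.cos θv * N) ^ 2 := by
    linarith [sq_nonneg (Real.cos θv * N), hmain]
  have hcosθv : 0 < Real.cos θv :=
    Real.cos_pos_of_mem_Ioo ⟨by linarith [hθv.1], hθv.2⟩
  have h := Real.sqrt_le_sqrt hsq
  rwa [Real.sqrt_sq hNθ, Real.sqrt_sq (by positivity)] at h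
end
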